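/- Stabilization of the normalized quantum 6j-symbol: fix natural numbers s₁, s₂, s₃, a natural number S, and natural numbers t₁, t₂, t₃, t₄. For each N ∈ ℕ define F_N = (1−q)^{−1} · Σ_{ℓ=0}^{N + min(t₁,t₂,t₃,t₄)} (−1)^ℓ (1 − q^{4N+S−ℓ}) q^{ℓ(3ℓ+1)/2 + ℓ(s₁+s₂+s₃)} · (q;q)_{4N+S−ℓ} / ((q;q)_{s₁+ℓ} (q;q)_{s₂+ℓ} (q;q)_{s₃+ℓ} (q;q)_{N+t₁−ℓ} (q;q)_{N+t₂−ℓ} (q;q)_{N+t₃−ℓ} (q;q)_{N+t₄−ℓ}) ∈ ℤ[[q]]. Then F_N converges coefficientwise to (1/((1−q) · (q;q)_∞³)) · Σ_{ℓ=0}^{∞} (−1)^ℓ q^{ℓ(3ℓ+1)/2 + ℓ(s₁+s₂+s₃)} / ((q;q)_{s₁+ℓ} (q;q)_{s₂+ℓ} (q;q)_{s₃+ℓ}), i.e., for every d ∈ ℕ there exists N₀ such that for all N ≥ N₀ the coefficients of q^d on the two sides agree. -/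

import Mathlib

/-!
STATEMENT 5 (Stabilization of the normalized quantum 6j-symbol).  Work in
ℤ[[q]] (`PowerSeries ℤ`, with `q := PowerSeries.X`).  `(q;q)_n` is a unit of
ℤ[[q]], as are `1 - q` and `(q;q)_∞`; `Ring.inverse` yields the inverse.
`(q;q)_∞` is the q-adic limit of `(q;q)_n`: its `d`-th coefficient is the
stable value `coeff d ((q;q)_d)`.  The infinite q-adic sum on the right-hand
side is encoded coefficientwise: its `ℓ`-th term has q-order `≥ ℓ(3ℓ+1)/2 ≥ ℓ`,
so the q-adic sum is the power series whose `d`-th coefficient is the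
(stabilized) finite sum `∑_{ℓ ≤ d}` of the `d`-th coefficients; this is
`SeriesSum`.

The statement: fix naturals `s₁ s₂ s₃ S t₁ t₂ t₃ t₄` and for `N : ℕ` put
`F_N = (1−q)^{−1} · Σ_{ℓ=0}^{N + min(t₁,t₂,t₃,t₄)} (−1)^ℓ (1 − q^{4N+S−ℓ})
        q^{ℓ(3ℓ+1)/2 + ℓ(s₁+s₂+s₃)} (q;q)_{4N+S−ℓ}
        / ((q;q)_{s₁+ℓ}(q;q)_{s₂+ℓ}(q;q)_{s₃+ℓ}
           (q;q)_{N+t₁−ℓ}(q;q)_{N+t₂−ℓ}(q;q)_{N+t₃−ℓ}(q;q)_{N+t₄−ℓ})`.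
Then `F_N` converges coefficientwise to
`(1/((1−q)(q;q)_∞³)) · Σ_{ℓ≥0} (−1)^ℓ q^{ℓ(3ℓ+1)/2 + ℓ(s₁+s₂+s₃)}
        / ((q;q)_{s₁+ℓ}(q;q)_{s₂+ℓ}(q;q)_{s₃+ℓ})`.
-/

noncomputable section
open PowerSeries

/-- `(q;q)_n = ∏_{j=1}^n (1 - q^j)`. -/
def qPoch (n : ℕ) : PowerSeries ℤ :=
  ∏ j ∈ Finset.range n, (1 - (X : PowerSeries ℤ) ^ (j + 1))

/-- `(q;q)_∞`, the q-adic limit of `(q;q)_n`. -/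
def qPochInf : PowerSeries ℤ := PowerSeries.mk fun d => coeff d (qPoch d)

/-- The q-adic sum of a family of power series whose `n`-th member has q-order `≥ n`. -/
def SeriesSum (f : ℕ → PowerSeries ℤ) : PowerSeries ℤ :=
  PowerSeries.mk fun d => ∑ k ∈ Finset.range (d + 1), coeff d (f k)

namespace Stmt5Aux

def gTerm (s₁ s₂ s₃ l : ℕ) : PowerSeries ℤ :=
  (-1 : PowerSeries ℤ) ^ l *
    (X : PowerSeries ℤ) ^ (l * (3 * l + 1) / 2 + l * (s₁ + s₂ + s₃)) *
    Ring.inverse (qPoch (s₁ + l) * qPoch (s₂ + l) * qPoch (s₃ + l))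

def TTerm (s₁ s₂ s₃ S t₁ t₂ t₃ t₄ N l : ℕ) : PowerSeries ℤ :=
  (-1 : PowerSeries ℤ) ^ l * (1 - (X : PowerSeries ℤ) ^ (4 * N + S - l)) *
    (X : PowerSeries ℤ) ^ (l * (3 * l + 1) / 2 + l * (s₁ + s₂ + s₃)) *
    qPoch (4 * N + S - l) *
    Ring.inverse (qPoch (s₁ + l) * qPoch (s₂ + l) * qPoch (s₃ + l) *
      (qPoch (N + t₁ - l) * qPoch (N + t₂ - l) * qPoch (N + t₃ - l) *
        qPoch (N + t₄ - l)))

lemma coeff_eq_zero_of_dvd {n e : ℕ} {f : PowerSeries ℤ}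
    (h : (X : PowerSeries ℤ) ^ n ∣ f) (he : e < n) : coeff e f = 0 :=
  (PowerSeries.X_pow_dvd_iff.mp h) e he

lemma cong_mul {n : ℕ} {a a' b b' : PowerSeries ℤ}
    (ha : (X : PowerSeries ℤ) ^ n ∣ a - a') (hb : (X : PowerSeries ℤ) ^ n ∣ b - b') :
    (X : PowerSeries ℤ) ^ n ∣ a * b - a' * b' := by
  have h : a * b - a' * b' = a * (b - b') + (a - a') * b' := by ring
  rw [h]
  exact dvd_add (hb.mul_left a) (ha.mul_right b')

lemma cong_refl (n : ℕ) (a : PowerSeries ℤ) : (X : PowerSeries ℤ) ^ n ∣ a - a := by simp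

lemma cong_trans {n : ℕ} {a b c : PowerSeries ℤ}
    (h₁ : (X : PowerSeries ℤ) ^ n ∣ a - b) (h₂ : (X : PowerSeries ℤ) ^ n ∣ b - c) :
    (X : PowerSeries ℤ) ^ n ∣ a - c := by
  have h : a - c = (a - b) + (b - c) := by ring
  rw [h]; exact dvd_add h₁ h₂

lemma cong_inv {n : ℕ} {a b : PowerSeries ℤ} (ha : IsUnit a) (hb : IsUnit b)
    (h : (X : PowerSeries ℤ) ^ n ∣ a - b) :
    (X : PowerSeries ℤ) ^ n ∣ Ring.inverse a - Ring.inverse b := by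
  have h1 : Ring.inverse a * a = 1 := Ring.inverse_mul_cancel a ha
  have h2 : b * Ring.inverse b = 1 := Ring.mul_inverse_cancel b hb
  have key : Ring.inverse a * (b - a) * Ring.inverse b = Ring.inverse a - Ring.inverse b := by
    rw [mul_sub, sub_mul, mul_assoc (Ring.inverse a) b, h2, mul_one, h1, one_mul]
  rw [← key]
  exact ((dvd_sub_comm.mp h).mul_left _).mul_right _

lemma constantCoeff_qPoch (m : ℕ) : constantCoeff (qPoch m) = 1 := by
  rw [qPoch, map_prod]
  apply Finset.prod_eq_one
  intro j _
  simp

lemma isUnit_qPoch (m : ℕ) : IsUnit (qPoch m) :=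
  isUnit_iff_constantCoeff.mpr (by rw [constantCoeff_qPoch]; exact isUnit_one)

lemma coeff_qPoch_stable (e m : ℕ) (h : e ≤ m) :
    coeff e (qPoch m) = coeff e (qPoch e) := by
  induction m with
  | zero => rw [Nat.le_zero.mp h]
  | succ m ih =>
    rcases Nat.eq_or_lt_of_le h with he | he
    · rw [he]
    · have hem : e ≤ m := Nat.lt_succ_iff.mp he
      rw [← ih hem]
      have hq : qPoch (m + 1) = qPoch m * (1 - X ^ (m + 1)) :=
        Finset.prod_range_succ _ m
      rw [hq, mul_sub, mul_one, map_sub, coeff_mul_X_pow', if_neg (by omega), sub_zero]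

lemma constantCoeff_qPochInf : constantCoeff qPochInf = 1 := by
  rw [← coeff_zero_eq_constantCoeff_apply, qPochInf, coeff_mk,
    coeff_zero_eq_constantCoeff_apply, constantCoeff_qPoch]

lemma isUnit_qPochInf : IsUnit qPochInf :=
  isUnit_iff_constantCoeff.mpr (by rw [constantCoeff_qPochInf]; exact isUnit_one)

lemma qPoch_cong_inf {n m : ℕ} (h : n ≤ m + 1) :
    (X : PowerSeries ℤ) ^ n ∣ qPoch m - qPochInf := by
  rw [PowerSeries.X_pow_dvd_iff]
  intro e he
  rw [map_sub, qPochInf, coeff_mk, coeff_qPoch_stable e m (by omega), sub_self]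

lemma one_sub_X_pow_cong {n k : ℕ} (h : n ≤ k) :
    (X : PowerSeries ℤ) ^ n ∣ (1 - (X : PowerSeries ℤ) ^ k) - 1 := by
  have : (1 - (X : PowerSeries ℤ) ^ k) - 1 = -(X ^ k) := by ring
  rw [this]
  exact (pow_dvd_pow X h).neg_right

lemma exp_ge (k s : ℕ) : k ≤ k * (3 * k + 1) / 2 + k * s := by
  have h1 : k * 2 ≤ k * (3 * k + 1) := by
    rcases Nat.eq_zero_or_pos k with hk | hk
    · simp [hk]
    · exact Nat.mul_le_mul_left k (by omega)
  have h2 : k ≤ k * (3 * k + 1) / 2 := (Nat.le_div_iff_mul_le (by norm_num)).mpr h1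
  exact le_trans h2 (Nat.le_add_right _ _)

lemma key_alg {a u : PowerSeries ℤ} (ha : IsUnit a) (hu : IsUnit u) :
    u * Ring.inverse (a * u ^ 4) = Ring.inverse a * Ring.inverse (u ^ 3) := by
  have h4 : IsUnit (a * u ^ 4) := ha.mul (hu.pow 4)
  have h3 : IsUnit (u ^ 3) := hu.pow 3
  apply h4.mul_left_cancel
  have e1 : a * u ^ 4 * (u * Ring.inverse (a * u ^ 4)) = u := by
    rw [mul_comm (a * u ^ 4), mul_assoc, Ring.inverse_mul_cancel _ h4, mul_one]
  have e2 : a * u ^ 4 * (Ring.inverse a * Ring.inverse (u ^ 3)) = u := by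
    have hre : a * u ^ 4 * (Ring.inverse a * Ring.inverse (u ^ 3)) =
        a * Ring.inverse a * (u ^ 3 * Ring.inverse (u ^ 3)) * u := by ring
    rw [hre, Ring.mul_inverse_cancel a ha, Ring.mul_inverse_cancel _ h3, one_mul, one_mul]
  rw [e1, e2]

lemma X_pow_dvd_gTerm (s₁ s₂ s₃ l : ℕ) : (X : PowerSeries ℤ) ^ l ∣ gTerm s₁ s₂ s₃ l := by
  refine dvd_trans (pow_dvd_pow X (exp_ge l (s₁ + s₂ + s₃))) ?_
  exact (dvd_mul_left _ _).mul_right _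

lemma X_pow_dvd_TTerm (s₁ s₂ s₃ S t₁ t₂ t₃ t₄ N l d : ℕ) (hl : d + 1 ≤ l) :
    (X : PowerSeries ℤ) ^ (d + 1) ∣ TTerm s₁ s₂ s₃ S t₁ t₂ t₃ t₄ N l := by
  refine dvd_trans (pow_dvd_pow X (le_trans hl (exp_ge l (s₁ + s₂ + s₃)))) ?_
  exact ((dvd_mul_left _ _).mul_right _).mul_right _

lemma TTerm_cong (s₁ s₂ s₃ S t₁ t₂ t₃ t₄ d N l : ℕ) (hl : l ≤ d) (hN : 2 * d + 2 ≤ N) :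
    (X : PowerSeries ℤ) ^ (d + 1) ∣
      TTerm s₁ s₂ s₃ S t₁ t₂ t₃ t₄ N l -
        gTerm s₁ s₂ s₃ l * Ring.inverse (qPochInf ^ 3) := by
  set n := d + 1 with hn
  have h1 : (X : PowerSeries ℤ) ^ n ∣ (1 - (X : PowerSeries ℤ) ^ (4 * N + S - l)) - 1 :=
    one_sub_X_pow_cong (by omega)
  have h2 : (X : PowerSeries ℤ) ^ n ∣ qPoch (4 * N + S - l) - qPochInf :=
    qPoch_cong_inf (by omega)
  have hq : ∀ t : ℕ, (X : PowerSeries ℤ) ^ n ∣ qPoch (N + t - l) - qPochInf :=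
    fun t => qPoch_cong_inf (by omega)
  have hP : (X : PowerSeries ℤ) ^ n ∣
      qPoch (N + t₁ - l) * qPoch (N + t₂ - l) * qPoch (N + t₃ - l) * qPoch (N + t₄ - l) -
        qPochInf * qPochInf * qPochInf * qPochInf :=
    cong_mul (cong_mul (cong_mul (hq t₁) (hq t₂)) (hq t₃)) (hq t₄)
  set A := qPoch (s₁ + l) * qPoch (s₂ + l) * qPoch (s₃ + l) with hA
  have hAunit : IsUnit A := ((isUnit_qPoch _).mul (isUnit_qPoch _)).mul (isUnit_qPoch _)
  have hAP : (X : PowerSeries ℤ) ^ n ∣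
      A * (qPoch (N + t₁ - l) * qPoch (N + t₂ - l) * qPoch (N + t₃ - l) * qPoch (N + t₄ - l)) -
        A * qPochInf ^ 4 := by
    have h4 : (qPochInf : PowerSeries ℤ) ^ 4 = qPochInf * qPochInf * qPochInf * qPochInf := by
      ring
    rw [h4]
    exact cong_mul (cong_refl n A) hP
  have hinv : (X : PowerSeries ℤ) ^ n ∣
      Ring.inverse (A * (qPoch (N + t₁ - l) * qPoch (N + t₂ - l) * qPoch (N + t₃ - l) *
        qPoch (N + t₄ - l))) - Ring.inverse (A * qPochInf ^ 4) := by
    refine cong_inv ?_ ?_ hAP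
    · exact hAunit.mul ((((isUnit_qPoch _).mul (isUnit_qPoch _)).mul (isUnit_qPoch _)).mul
        (isUnit_qPoch _))
    · exact hAunit.mul (isUnit_qPochInf.pow 4)
  have hmid : (X : PowerSeries ℤ) ^ n ∣
      TTerm s₁ s₂ s₃ S t₁ t₂ t₃ t₄ N l -
        (-1 : PowerSeries ℤ) ^ l * 1 *
          (X : PowerSeries ℤ) ^ (l * (3 * l + 1) / 2 + l * (s₁ + s₂ + s₃)) * qPochInf *
          Ring.inverse (A * qPochInf ^ 4) := by
    unfold TTerm
    rw [← hA]
    exact cong_mul (cong_mul (cong_mul (cong_mul (cong_refl n _) h1) (cong_refl n _)) h2) hinv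
  have heq : (-1 : PowerSeries ℤ) ^ l * 1 *
      (X : PowerSeries ℤ) ^ (l * (3 * l + 1) / 2 + l * (s₁ + s₂ + s₃)) * qPochInf *
      Ring.inverse (A * qPochInf ^ 4) =
      gTerm s₁ s₂ s₃ l * Ring.inverse (qPochInf ^ 3) := by
    have k := key_alg hAunit isUnit_qPochInf
    unfold gTerm
    rw [← hA]
    calc (-1 : PowerSeries ℤ) ^ l * 1 *
        (X : PowerSeries ℤ) ^ (l * (3 * l + 1) / 2 + l * (s₁ + s₂ + s₃)) * qPochInf *
        Ring.inverse (A * qPochInf ^ 4)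
        = (-1 : PowerSeries ℤ) ^ l *
          (X : PowerSeries ℤ) ^ (l * (3 * l + 1) / 2 + l * (s₁ + s₂ + s₃)) *
          (qPochInf * Ring.inverse (A * qPochInf ^ 4)) := by ring
      _ = (-1 : PowerSeries ℤ) ^ l *
          (X : PowerSeries ℤ) ^ (l * (3 * l + 1) / 2 + l * (s₁ + s₂ + s₃)) *
          (Ring.inverse A * Ring.inverse (qPochInf ^ 3)) := by rw [k]
      _ = (-1 : PowerSeries ℤ) ^ l *
          (X : PowerSeries ℤ) ^ (l * (3 * l + 1) / 2 + l * (s₁ + s₂ + s₃)) *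
          Ring.inverse A * Ring.inverse (qPochInf ^ 3) := by ring
  rw [← heq]
  exact hmid

lemma seriesSum_cong (s₁ s₂ s₃ d : ℕ) :
    (X : PowerSeries ℤ) ^ (d + 1) ∣
      SeriesSum (gTerm s₁ s₂ s₃) - ∑ l ∈ Finset.range (d + 1), gTerm s₁ s₂ s₃ l := by
  rw [PowerSeries.X_pow_dvd_iff]
  intro e he
  rw [map_sub, SeriesSum, coeff_mk, map_sum]
  have hsub : ∑ k ∈ Finset.range (d + 1), coeff e (gTerm s₁ s₂ s₃ k) =
      ∑ k ∈ Finset.range (e + 1), coeff e (gTerm s₁ s₂ s₃ k) := by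
    symm
    apply Finset.sum_subset (Finset.range_subset_range.mpr (by omega))
    intro k hk hk'
    have hke : e < k := by
      simp only [Finset.mem_range] at hk hk'
      omega
    exact coeff_eq_zero_of_dvd (X_pow_dvd_gTerm s₁ s₂ s₃ k) hke
  rw [hsub, sub_self]

end Stmt5Aux

open Stmt5Aux

theorem stmt5 (s₁ s₂ s₃ S t₁ t₂ t₃ t₄ : ℕ) (d : ℕ) :
    ∃ N₀ : ℕ, ∀ N : ℕ, N₀ ≤ N →
      coeff d (Ring.inverse (1 - (X : PowerSeries ℤ)) *
        ∑ l ∈ Finset.range (N + min t₁ (min t₂ (min t₃ t₄)) + 1),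
          (-1 : PowerSeries ℤ) ^ l * (1 - (X : PowerSeries ℤ) ^ (4 * N + S - l)) *
            (X : PowerSeries ℤ) ^ (l * (3 * l + 1) / 2 + l * (s₁ + s₂ + s₃)) *
            qPoch (4 * N + S - l) *
            Ring.inverse (qPoch (s₁ + l) * qPoch (s₂ + l) * qPoch (s₃ + l) *
              (qPoch (N + t₁ - l) * qPoch (N + t₂ - l) * qPoch (N + t₃ - l) *
                qPoch (N + t₄ - l))))
      = coeff d (Ring.inverse ((1 - (X : PowerSeries ℤ)) * qPochInf ^ 3) *
          SeriesSum fun l => (-1 : PowerSeries ℤ) ^ l *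
            (X : PowerSeries ℤ) ^ (l * (3 * l + 1) / 2 + l * (s₁ + s₂ + s₃)) *
            Ring.inverse (qPoch (s₁ + l) * qPoch (s₂ + l) * qPoch (s₃ + l))) := by
  refine ⟨2 * d + 2, fun N hN => ?_⟩
  have key : ∀ a b : PowerSeries ℤ, (X : PowerSeries ℤ) ^ (d + 1) ∣ a - b →
      coeff d a = coeff d b := by
    intro a b hab
    have h0 := coeff_eq_zero_of_dvd hab (Nat.lt_succ_self d)
    rw [map_sub, sub_eq_zero] at h0
    exact h0
  refine key _ _ ?_
  show (X : PowerSeries ℤ) ^ (d + 1) ∣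
    Ring.inverse (1 - (X : PowerSeries ℤ)) *
      (∑ l ∈ Finset.range (N + min t₁ (min t₂ (min t₃ t₄)) + 1),
        TTerm s₁ s₂ s₃ S t₁ t₂ t₃ t₄ N l) -
    Ring.inverse ((1 - (X : PowerSeries ℤ)) * qPochInf ^ 3) *
      SeriesSum (gTerm s₁ s₂ s₃)
  set SigT := ∑ l ∈ Finset.range (N + min t₁ (min t₂ (min t₃ t₄)) + 1),
      TTerm s₁ s₂ s₃ S t₁ t₂ t₃ t₄ N l with hSigT
  set SS := SeriesSum (gTerm s₁ s₂ s₃) with hSS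
  have c1 : (X : PowerSeries ℤ) ^ (d + 1) ∣
      SigT - ∑ l ∈ Finset.range (d + 1), TTerm s₁ s₂ s₃ S t₁ t₂ t₃ t₄ N l := by
    rw [hSigT, ← Finset.sum_range_add_sum_Ico _
      (show d + 1 ≤ N + min t₁ (min t₂ (min t₃ t₄)) + 1 by omega), add_sub_cancel_left]
    exact Finset.dvd_sum fun l hl =>
      X_pow_dvd_TTerm s₁ s₂ s₃ S t₁ t₂ t₃ t₄ N l d (Finset.mem_Ico.mp hl).1
  have c2 : (X : PowerSeries ℤ) ^ (d + 1) ∣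
      (∑ l ∈ Finset.range (d + 1), TTerm s₁ s₂ s₃ S t₁ t₂ t₃ t₄ N l) -
        ∑ l ∈ Finset.range (d + 1), gTerm s₁ s₂ s₃ l * Ring.inverse (qPochInf ^ 3) := by
    rw [← Finset.sum_sub_distrib]
    refine Finset.dvd_sum fun l hl => ?_
    exact TTerm_cong s₁ s₂ s₃ S t₁ t₂ t₃ t₄ d N l
      (by have := Finset.mem_range.mp hl; omega) hN
  have c3 : (∑ l ∈ Finset.range (d + 1), gTerm s₁ s₂ s₃ l * Ring.inverse (qPochInf ^ 3)) =
      (∑ l ∈ Finset.range (d + 1), gTerm s₁ s₂ s₃ l) * Ring.inverse (qPochInf ^ 3) :=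
    (Finset.sum_mul _ _ _).symm
  rw [c3] at c2
  have c4 : (X : PowerSeries ℤ) ^ (d + 1) ∣
      (∑ l ∈ Finset.range (d + 1), gTerm s₁ s₂ s₃ l) * Ring.inverse (qPochInf ^ 3) -
        Ring.inverse (qPochInf ^ 3) * SS := by
    have h' : (X : PowerSeries ℤ) ^ (d + 1) ∣
        (∑ l ∈ Finset.range (d + 1), gTerm s₁ s₂ s₃ l) - SS :=
      dvd_sub_comm.mp (seriesSum_cong s₁ s₂ s₃ d)
    have hre : (∑ l ∈ Finset.range (d + 1), gTerm s₁ s₂ s₃ l) * Ring.inverse (qPochInf ^ 3) -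
        Ring.inverse (qPochInf ^ 3) * SS =
        ((∑ l ∈ Finset.range (d + 1), gTerm s₁ s₂ s₃ l) - SS) * Ring.inverse (qPochInf ^ 3) := by
      ring
    rw [hre]
    exact h'.mul_right _
  have hmain : (X : PowerSeries ℤ) ^ (d + 1) ∣ SigT - Ring.inverse (qPochInf ^ 3) * SS :=
    cong_trans c1 (cong_trans c2 c4)
  rw [Ring.mul_inverse_rev]
  have hre2 : Ring.inverse (1 - (X : PowerSeries ℤ)) * SigT -
      Ring.inverse (qPochInf ^ 3) * Ring.inverse (1 - (X : PowerSeries ℤ)) * SS =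
      Ring.inverse (1 - (X : PowerSeries ℤ)) * (SigT - Ring.inverse (qPochInf ^ 3) * SS) := by
    ring
  rw [hre2]
  exact hmain.mul_left _
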